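/- Fix t ∈ ℝ. For all sufficiently large real n, the quartic equation 35b⁴ + 20b³t + 18b²t² + 20bt³ + 35t⁴ = 64n has exactly one real solution b satisfying b > t. -/

import Mathlib

private lemma quartic_bound (t b B : ℝ) (hb : |b| ≤ B) (ht : |t| ≤ B) :
    35 * b ^ 4 + 20 * b ^ 3 * t + 18 * b ^ 2 * t ^ 2 + 20 * b * t ^ 3 + 35 * t ^ 4
      ≤ 128 * B ^ 4 := by
  have e1 : b ^ 3 * t ≤ |b| ^ 3 * |t| := by
    calc b ^ 3 * t ≤ |b ^ 3 * t| := le_abs_self _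
    _ = |b| ^ 3 * |t| := by rw [abs_mul, abs_pow]
  have e2 : b * t ^ 3 ≤ |b| * |t| ^ 3 := by
    calc b * t ^ 3 ≤ |b * t ^ 3| := le_abs_self _
    _ = |b| * |t| ^ 3 := by rw [abs_mul, abs_pow]
  have e3 : b ^ 4 = |b| ^ 4 := (abs_pow b 4 ▸ (abs_of_nonneg (by positivity)).symm)
  have e4 : t ^ 4 = |t| ^ 4 := (abs_pow t 4 ▸ (abs_of_nonneg (by positivity)).symm)
  have e5 : b ^ 2 * t ^ 2 = |b| ^ 2 * |t| ^ 2 := by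
    rw [← abs_pow, ← abs_pow, ← abs_mul, abs_of_nonneg (by positivity)]
  have hB0 : 0 ≤ B := le_trans (abs_nonneg b) hb
  have key : 35 * |b| ^ 4 + 20 * |b| ^ 3 * |t| + 18 * |b| ^ 2 * |t| ^ 2
      + 20 * |b| * |t| ^ 3 + 35 * |t| ^ 4
      ≤ 35 * B ^ 4 + 20 * B ^ 3 * B + 18 * B ^ 2 * B ^ 2 + 20 * B * B ^ 3 + 35 * B ^ 4 := by
    gcongr <;> first | positivity | nlinarith [hB0]
  nlinarith [key]

private lemma quartic_strictMono (t : ℝ) :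
    StrictMonoOn (fun b : ℝ => 35 * b ^ 4 + 20 * b ^ 3 * t + 18 * b ^ 2 * t ^ 2
      + 20 * b * t ^ 3 + 35 * t ^ 4) (Set.Ici (2 * |t| + 1)) := by
  apply strictMonoOn_of_deriv_pos (convex_Ici _)
  · exact (Continuous.continuousOn (by continuity))
  · intro x hx
    rw [interior_Ici] at hx
    have hd : HasDerivAt (fun b : ℝ => 35 * b ^ 4 + 20 * b ^ 3 * t + 18 * b ^ 2 * t ^ 2
        + 20 * b * t ^ 3 + 35 * t ^ 4)
        (140 * x ^ 3 + 60 * x ^ 2 * t + 36 * x * t ^ 2 + 20 * t ^ 3) x := by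
      have := ((hasDerivAt_pow 4 x).const_mul 35) |>.add
        (((hasDerivAt_pow 3 x).const_mul 20).mul_const t) |>.add
        (((hasDerivAt_pow 2 x).const_mul 18).mul_const (t ^ 2)) |>.add
        ((hasDerivAt_id x).const_mul 20 |>.mul_const (t ^ 3)) |>.add
        (hasDerivAt_const x (35 * t ^ 4))
      exact this.congr_deriv (by norm_num; ring)
    rw [hd.deriv]
    have h1 : -|t| ≤ t := neg_abs_le t
    have h2 : t ≤ |t| := le_abs_self t
    have ha : 0 ≤ |t| := abs_nonneg t
    have hx' : 2 * |t| + 1 < x := hx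
    nlinarith [sq_nonneg (x + t), sq_nonneg (x - t), sq_nonneg x, sq_nonneg t,
      mul_nonneg ha ha, sq_nonneg (x - |t|), sq_nonneg (x + |t|)]

/-- For fixed `t` and all sufficiently large real `n`, the quartic endpoint
equation `35b⁴ + 20b³t + 18b²t² + 20bt³ + 35t⁴ = 64n` has exactly one real
solution `b` with `b > t`. -/
theorem quartic_endpoint_equation (t : ℝ) :
    ∃ N : ℝ, ∀ n : ℝ, N ≤ n →
      ∃! b : ℝ, t < b ∧
        35 * b ^ 4 + 20 * b ^ 3 * t + 18 * b ^ 2 * t ^ 2 + 20 * b * t ^ 3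
          + 35 * t ^ 4 = 64 * n := by
  set f : ℝ → ℝ := fun b => 35 * b ^ 4 + 20 * b ^ 3 * t + 18 * b ^ 2 * t ^ 2
    + 20 * b * t ^ 3 + 35 * t ^ 4 with hf
  set B : ℝ := 2 * |t| + 1 with hB
  have ha : 0 ≤ |t| := abs_nonneg t
  have htB : |t| ≤ B := by rw [hB]; linarith
  have hB1 : 1 ≤ B := by rw [hB]; linarith
  have htltB : t < B := lt_of_le_of_lt (le_abs_self t) (by rw [hB]; linarith)
  refine ⟨4 * B ^ 4 + 1, fun n hn => ?_⟩
  have hB40 : (0:ℝ) ≤ B ^ 4 := by positivity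
  have hBn : 128 * B ^ 4 < 64 * n := by nlinarith
  -- any solution with t < b must have B ≤ b
  have hsol_ge : ∀ b : ℝ, t < b → f b = 64 * n → B ≤ b := by
    intro b hb hfb
    by_contra h
    push_neg at h
    have hbabs : |b| ≤ B := by
      rw [abs_le]
      constructor
      · have : -B ≤ t := by rw [hB]; nlinarith [neg_abs_le t]
        linarith
      · linarith
    have := quartic_bound t b B hbabs htB
    rw [hf] at hfb
    simp only at hfb
    linarith
  -- existence via IVT
  have hn0 : 0 < n := by nlinarith [hB40]
  set c : ℝ := max B (64 * n) with hc
  have hc1 : B ≤ c := le_max_left _ _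
  have hc2 : 64 * n ≤ c := le_max_right _ _
  have hc1' : 1 ≤ c := le_trans hB1 hc1
  have hfc : 64 * n ≤ f c := by
    show 64 * n ≤ 35 * c ^ 4 + 20 * c ^ 3 * t + 18 * c ^ 2 * t ^ 2 + 20 * c * t ^ 3 + 35 * t ^ 4
    have hct : 2 * |t| + 1 ≤ c := le_trans (le_of_eq hB) hc1
    have h1 : -|t| ≤ t := neg_abs_le t
    have h2 : t ≤ |t| := le_abs_self t
    have h2a : 2 * |t| < c := by linarith
    have hc0 : (0:ℝ) < c := by linarith
    have h18 : 18 * c ^ 4 ≤ 35 * c ^ 4 + 20 * c ^ 3 * t + 18 * c ^ 2 * t ^ 2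
        + 20 * c * t ^ 3 + 35 * t ^ 4 := by
      nlinarith [mul_nonneg (mul_nonneg hc0.le hc0.le) (sub_nonneg.2 h2a.le),
        mul_nonneg (mul_nonneg hc0.le ha) (sub_nonneg.2 h2a.le),
        mul_nonneg (mul_nonneg ha ha) (sub_nonneg.2 h2a.le),
        sq_nonneg (c - 2 * |t|), sq_nonneg (c + t), sq_nonneg (c - t), sq_nonneg t,
        mul_nonneg hc0.le (sq_nonneg (c - 2 * |t|)),
        mul_nonneg hc0.le (mul_nonneg (sub_nonneg.2 h2a.le) (sub_nonneg.2 h2a.le))]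
    have hc4 : c ≤ c ^ 4 := by nlinarith [sq_nonneg (c - 1), sq_nonneg (c + 1), sq_nonneg c]
    nlinarith [h18, hc4]
  have hfB : f B < 64 * n := by
    have : f B ≤ 128 * B ^ 4 := quartic_bound t B B (by rw [abs_of_nonneg (by linarith)]) htB
    linarith
  have hcontf : Continuous f := by
    rw [hf]
    fun_prop
  have hcont : ContinuousOn f (Set.Icc B c) := hcontf.continuousOn
  have hsub := intermediate_value_Icc hc1 hcont
  have hmem : (64 * n) ∈ Set.Icc (f B) (f c) := ⟨le_of_lt hfB, hfc⟩
  obtain ⟨b, hbmem, hfb⟩ := hsub hmem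
  refine ⟨b, ⟨lt_of_lt_of_le htltB hbmem.1, hfb⟩, ?_⟩
  intro y hy
  have hyB : B ≤ y := hsol_ge y hy.1 hy.2
  have hbB : B ≤ b := hbmem.1
  exact (quartic_strictMono t).injOn hyB hbB (hy.2.trans hfb.symm)
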